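/- There exist vectors q̄_1,…,q̄_n ∈ ℂ^N and p̄_1,…,p̄_n ∈ ℂ^N such that for every k ∈ ℂ with k ≠ k̄₁, the soliton matrix Γ(k) = χ_n(k)·χ_{n−1}(k)···χ_1(k) admits the representation Γ(k) = I + Σ_{l=1}^n Σ_{j=1}^l (k−k̄₁)^{-(n+1−l)} · q̄_j p̄_{l+1−j}^T, where q̄ p̄^T denotes the N×N outer-product matrix. -/

import Mathlib

open scoped BigOperators Matrix

namespace SolitonFormAux

variable {N : ℕ}

lemma vmv_mul (x y z t : Fin N → ℂ) :
    Matrix.vecMulVec x y * Matrix.vecMulVec z t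
      = (∑ a, y a * z a) • Matrix.vecMulVec x t := by
  ext i j
  simp only [Matrix.mul_apply, Matrix.vecMulVec_apply, Matrix.smul_apply, smul_eq_mul]
  rw [Finset.sum_mul]
  exact Finset.sum_congr rfl fun a _ => by ring

lemma vmv_add_left (x y z : Fin N → ℂ) :
    Matrix.vecMulVec (x + y) z = Matrix.vecMulVec x z + Matrix.vecMulVec y z := by
  ext i j; simp [Matrix.vecMulVec_apply, add_mul]

lemma vmv_smul_left (c : ℂ) (x z : Fin N → ℂ) :
    Matrix.vecMulVec (c • x) z = c • Matrix.vecMulVec x z := by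
  ext i j; simp [Matrix.vecMulVec_apply, mul_assoc]

lemma vmv_zero_left (z : Fin N → ℂ) : Matrix.vecMulVec (0 : Fin N → ℂ) z = 0 := by
  ext i j; simp [Matrix.vecMulVec_apply]

lemma vmv_smul_right (c : ℂ) (x z : Fin N → ℂ) :
    Matrix.vecMulVec x (c • z) = c • Matrix.vecMulVec x z := by
  ext i j; simp [Matrix.vecMulVec_apply]; ring

lemma vmv_sub_right (x z t : Fin N → ℂ) :
    Matrix.vecMulVec x (z - t) = Matrix.vecMulVec x z - Matrix.vecMulVec x t := by
  ext i j; simp [Matrix.vecMulVec_apply, mul_sub]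

lemma vmv_sum_right {α : Type*} (s : Finset α) (x : Fin N → ℂ) (f : α → Fin N → ℂ) :
    Matrix.vecMulVec x (∑ a ∈ s, f a) = ∑ a ∈ s, Matrix.vecMulVec x (f a) := by
  ext i j; simp [Matrix.vecMulVec_apply, Finset.mul_sum, Matrix.sum_apply]

lemma prod_split (A : ℕ → Matrix (Fin N) (Fin N) ℂ) (m : ℕ) :
    (List.ofFn (fun j : Fin (m+1) => A j)).reverse.prod
      = A m * (List.ofFn (fun j : Fin m => A j)).reverse.prod := by
  rw [List.ofFn_succ']
  simp

lemma soliton_aux (kb : ℂ) (v w : ℕ → Fin N → ℂ) (m : ℕ) (hm : 1 ≤ m)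
    (helem : ∀ j, j + 1 < m → ∑ a, w (j + 1) a * v j a ≠ 0) :
    ∃ q p : ℕ → Fin N → ℂ,
      (∃ c : ℂ, c ≠ 0 ∧ q 0 = c • v (m - 1)) ∧
      (∀ i, m ≤ i → q i = 0) ∧ (∀ i, m ≤ i → p i = 0) ∧
      ∀ k : ℂ, k ≠ kb →
        (List.ofFn (fun j : Fin m =>
          (1 : Matrix (Fin N) (Fin N) ℂ) +
            (k - kb)⁻¹ • Matrix.vecMulVec (v j) (w j))).reverse.prod
          = 1 + ∑ l ∈ Finset.range m, ∑ j ∈ Finset.range (l + 1),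
              ((k - kb) ^ (m - l))⁻¹ • Matrix.vecMulVec (q j) (p (l - j)) := by
  induction m, hm using Nat.le_induction with
  | base =>
    refine ⟨fun i => if i = 0 then v 0 else 0, fun i => if i = 0 then w 0 else 0,
      ⟨1, one_ne_zero, by simp⟩, ?_, ?_, ?_⟩
    · intro i hi; simp [show i ≠ 0 by omega]
    · intro i hi; simp [show i ≠ 0 by omega]
    · intro k hk; simp
  | succ m hm ih =>
    obtain ⟨q, p, ⟨c, hc0, hq0⟩, hqz, hpz, hrep⟩ := ih (fun j hj => helem j (by omega))
    set d : ℕ → ℂ := fun i => ∑ a, w m a * q i a with hd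
    have hd0 : d 0 ≠ 0 := by
      have h1 : d 0 = c * ∑ a, w m a * v (m - 1) a := by
        simp only [hd, hq0, Pi.smul_apply, smul_eq_mul, Finset.mul_sum]
        exact Finset.sum_congr rfl fun a _ => by ring
      have h2 : ∑ a, w m a * v (m - 1) a ≠ 0 := by
        have := helem (m - 1) (by omega)
        rwa [Nat.sub_add_cancel hm] at this
      rw [h1]; exact mul_ne_zero hc0 h2
    set Q : ℕ → Fin N → ℂ := fun i => (if i = 0 then 0 else q (i - 1)) + d i • v m with hQ
    set P : ℕ → Fin N → ℂ := fun i => if i < m then p i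
      else if i = m then (d 0)⁻¹ • (w m - ∑ j ∈ Finset.range m, d (j + 1) • p (m - 1 - j))
      else 0 with hP
    have hQ0 : Q 0 = d 0 • v m := by simp [hQ]
    have hQs : ∀ i : ℕ, Q (i + 1) = q i + d (i + 1) • v m := by
      intro i; simp [hQ]
    have hPlt : ∀ i, i < m → P i = p i := by
      intro i hi; simp [hP, hi]
    have hPm : P m = (d 0)⁻¹ • (w m - ∑ j ∈ Finset.range m, d (j + 1) • p (m - 1 - j)) := by
      simp [hP]
    have hQz : ∀ i, m + 1 ≤ i → Q i = 0 := by
      intro i hi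
      have h1 : q (i - 1) = 0 := hqz _ (by omega)
      have h2 : d i = 0 := by simp only [hd]; rw [hqz i (by omega)]; simp
      simp [hQ, h1, h2, show i ≠ 0 by omega]
    have hPz : ∀ i, m + 1 ≤ i → P i = 0 := by
      intro i hi
      simp [hP, show ¬ i < m by omega, show i ≠ m by omega]
    refine ⟨Q, P, ⟨d 0, hd0, by rw [hQ0, Nat.add_sub_cancel]⟩, hQz, hPz, ?_⟩
    intro k hk
    have hu : k - kb ≠ 0 := sub_ne_zero.mpr hk
    set u : ℂ := k - kb with hudef
    set V : Matrix (Fin N) (Fin N) ℂ := Matrix.vecMulVec (v m) (w m) with hV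
    set S : Matrix (Fin N) (Fin N) ℂ := ∑ l ∈ Finset.range m, ∑ j ∈ Finset.range (l + 1),
        (u ^ (m - l))⁻¹ • Matrix.vecMulVec (q j) (p (l - j)) with hS
    have hsplit : (List.ofFn (fun j : Fin (m + 1) =>
        (1 : Matrix (Fin N) (Fin N) ℂ) + u⁻¹ • Matrix.vecMulVec (v j) (w j))).reverse.prod
        = ((1 : Matrix (Fin N) (Fin N) ℂ) + u⁻¹ • V) * (1 + S) := by
      rw [prod_split (fun j => (1 : Matrix (Fin N) (Fin N) ℂ)
        + u⁻¹ • Matrix.vecMulVec (v j) (w j)) m, hrep k hk]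
    rw [hsplit]
    have hL : ((1 : Matrix (Fin N) (Fin N) ℂ) + u⁻¹ • V) * (1 + S)
        = 1 + (S + (u⁻¹ • V + u⁻¹ • (V * S))) := by
      rw [add_mul, one_mul, mul_add, smul_mul_assoc, mul_one, add_assoc, smul_mul_assoc]
    rw [hL]
    congr 1
    set B : ℕ → Matrix (Fin N) (Fin N) ℂ :=
      fun l => ∑ j ∈ Finset.range l, Matrix.vecMulVec (q j) (p (l - 1 - j)) with hB
    set D : ℕ → Matrix (Fin N) (Fin N) ℂ :=
      fun l => ∑ j ∈ Finset.range (l + 1), d j • Matrix.vecMulVec (v m) (p (l - j)) with hD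
    -- inner sums for l < m
    have hClt : ∀ l, l < m → (∑ j ∈ Finset.range (l + 1),
        Matrix.vecMulVec (Q j) (P (l - j))) = B l + D l := by
      intro l hl
      have h1 : ∀ j ∈ Finset.range (l + 1), Matrix.vecMulVec (Q j) (P (l - j))
          = Matrix.vecMulVec (if j = 0 then 0 else q (j - 1)) (p (l - j))
            + d j • Matrix.vecMulVec (v m) (p (l - j)) := by
        intro j hj
        rw [hPlt _ (by omega), show Q j = (if j = 0 then 0 else q (j - 1)) + d j • v m from rfl,
          vmv_add_left, vmv_smul_left]
      rw [Finset.sum_congr rfl h1, Finset.sum_add_distrib]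
      congr 1
      rw [Finset.sum_range_succ']
      rw [if_pos rfl, vmv_zero_left, add_zero]
      refine Finset.sum_congr rfl fun j hj => ?_
      rw [if_neg (Nat.succ_ne_zero j), Nat.add_sub_cancel,
        show l - (j + 1) = l - 1 - j by omega]
    -- inner sum for l = m
    have hCm : (∑ j ∈ Finset.range (m + 1),
        Matrix.vecMulVec (Q j) (P (m - j))) = B m + V := by
      rw [Finset.sum_range_succ']
      have h1 : ∀ j ∈ Finset.range m, Matrix.vecMulVec (Q (j + 1)) (P (m - (j + 1)))
          = Matrix.vecMulVec (q j) (p (m - 1 - j))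
            + d (j + 1) • Matrix.vecMulVec (v m) (p (m - 1 - j)) := by
        intro j hj
        simp only [Finset.mem_range] at hj
        rw [show m - (j + 1) = m - 1 - j by omega, hPlt _ (by omega), hQs j,
          vmv_add_left, vmv_smul_left]
      have h2 : Matrix.vecMulVec (Q 0) (P (m - 0))
          = V - ∑ j ∈ Finset.range m, d (j + 1) • Matrix.vecMulVec (v m) (p (m - 1 - j)) := by
        rw [show m - 0 = m from rfl, hQ0, hPm, vmv_smul_left, vmv_smul_right, smul_smul,
          mul_inv_cancel₀ hd0, one_smul, vmv_sub_right, vmv_sum_right]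
        rw [hV]
        congr 1
        exact Finset.sum_congr rfl fun j hj => by rw [vmv_smul_right]
      rw [Finset.sum_congr rfl h1, Finset.sum_add_distrib, h2, hB]
      abel
    -- assemble
    have hT : ∀ l ∈ Finset.range (m + 1), (∑ j ∈ Finset.range (l + 1),
        (u ^ (m + 1 - l))⁻¹ • Matrix.vecMulVec (Q j) (P (l - j)))
        = (u ^ (m + 1 - l))⁻¹ • ∑ j ∈ Finset.range (l + 1),
            Matrix.vecMulVec (Q j) (P (l - j)) :=
      fun l _ => (Finset.smul_sum).symm
    rw [Finset.sum_congr rfl hT, Finset.sum_range_succ, hCm,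
      show m + 1 - m = 1 by omega, pow_one]
    have hT2 : ∀ l ∈ Finset.range m, (u ^ (m + 1 - l))⁻¹ •
        (∑ j ∈ Finset.range (l + 1), Matrix.vecMulVec (Q j) (P (l - j)))
        = (u ^ (m + 1 - l))⁻¹ • B l + (u ^ (m + 1 - l))⁻¹ • D l := by
      intro l hl
      simp only [Finset.mem_range] at hl
      rw [hClt l hl, smul_add]
    rw [Finset.sum_congr rfl hT2, Finset.sum_add_distrib, smul_add]
    -- B-part
    have hS' : S = ∑ l ∈ Finset.range m, (u ^ (m - l))⁻¹ •
        ∑ j ∈ Finset.range (l + 1), Matrix.vecMulVec (q j) (p (l - j)) := by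
      rw [hS]; exact Finset.sum_congr rfl fun l _ => (Finset.smul_sum).symm
    have hBpart : (∑ l ∈ Finset.range m, (u ^ (m + 1 - l))⁻¹ • B l) + u⁻¹ • B m = S := by
      obtain ⟨m', rfl⟩ : ∃ m', m = m' + 1 := ⟨m - 1, by omega⟩
      rw [Finset.sum_range_succ']
      have e0 : B 0 = 0 := by rw [hB]; simp
      have e1 : ∀ l ∈ Finset.range m', (u ^ (m' + 1 + 1 - (l + 1)))⁻¹ • B (l + 1)
          = (u ^ (m' + 1 - l))⁻¹ • ∑ j ∈ Finset.range (l + 1),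
              Matrix.vecMulVec (q j) (p (l - j)) := by
        intro l hl
        rw [show m' + 1 + 1 - (l + 1) = m' + 1 - l by omega]
        simp only [hB, Nat.add_sub_cancel]
      rw [e0, smul_zero, add_zero, Finset.sum_congr rfl e1, hS', Finset.sum_range_succ,
        show m' + 1 - m' = 1 by omega, pow_one]
      simp only [hB, Nat.add_sub_cancel]
    -- D-part
    have hDpart : (∑ l ∈ Finset.range m, (u ^ (m + 1 - l))⁻¹ • D l) = u⁻¹ • (V * S) := by
      have e : ∀ l ∈ Finset.range m, (u ^ (m + 1 - l))⁻¹ • D l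
          = u⁻¹ • (V * ((u ^ (m - l))⁻¹ •
              ∑ j ∈ Finset.range (l + 1), Matrix.vecMulVec (q j) (p (l - j)))) := by
        intro l hl
        simp only [Finset.mem_range] at hl
        have hVC : V * (∑ j ∈ Finset.range (l + 1), Matrix.vecMulVec (q j) (p (l - j)))
            = D l := by
          rw [Finset.mul_sum]
          simp only [hD, hV]
          exact Finset.sum_congr rfl fun j hj => by rw [vmv_mul]
        rw [mul_smul_comm, hVC, smul_smul]
        congr 1
        rw [show m + 1 - l = (m - l) + 1 by omega, pow_succ, mul_inv, mul_comm]
      rw [Finset.sum_congr rfl e, hS', Finset.mul_sum, Finset.smul_sum]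
    rw [hDpart, ← hBpart]
    abel

end SolitonFormAux

/-- Lemma 3, form of `Γ`: For an elementary higher-order zero, the
soliton matrix `Γ(k) = χ_n(k)···χ_1(k)` (with `χ_j(k) = I + (k−k̄₁)⁻¹ v_j w_jᵀ`,
normalization `⟨w_j|v_j⟩ = k̄₁−k₁` and elementarity `⟨w_{j+1}|v_j⟩ ≠ 0`) admits the
representation `Γ(k) = I + Σ_{l=1}^n Σ_{j=1}^l (k−k̄₁)^{−(n+1−l)} q̄_j p̄_{l+1−j}ᵀ`.
(Indices are shifted to start at 0: `v 0,…,v (n−1)` stand for `v_1,…,v_n`.) -/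
theorem soliton_matrix_form (N n : ℕ) (hN : 1 ≤ N) (hn : 1 ≤ n)
    (k₁ kb : ℂ) (hk : k₁ ≠ kb)
    (v w : ℕ → Fin N → ℂ)
    (hnorm : ∀ j < n, ∑ a, w j a * v j a = kb - k₁)
    (helem : ∀ j, j + 1 < n → ∑ a, w (j + 1) a * v j a ≠ 0)
    (Γ : ℂ → Matrix (Fin N) (Fin N) ℂ)
    (hΓ : ∀ k, Γ k = (List.ofFn (fun j : Fin n =>
      (1 : Matrix (Fin N) (Fin N) ℂ) +
        (k - kb)⁻¹ • Matrix.vecMulVec (v j) (w j))).reverse.prod) :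
    ∃ q p : ℕ → Fin N → ℂ,
      ∀ k : ℂ, k ≠ kb →
        Γ k = 1 + ∑ l ∈ Finset.range n, ∑ j ∈ Finset.range (l + 1),
          ((k - kb) ^ (n - l))⁻¹ • Matrix.vecMulVec (q j) (p (l - j)) := by
  obtain ⟨q, p, _, _, _, hrep⟩ := SolitonFormAux.soliton_aux kb v w n hn helem
  exact ⟨q, p, fun k hk => by rw [hΓ k]; exact hrep k hk⟩
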